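/- Let G be a finite connected graph that is [p]-edge geodetic and H a finite connected graph that is [q]-edge geodetic. Then the strong product G ⊠ H is [k]-edge geodetic where k = min{p, q}: every edge of G ⊠ H lies on a geodesic of length min{p,q}, and some edge of G ⊠ H lies on no geodesic of length min{p,q}+1. -/

import Mathlib

open SimpleGraph

/-- A walk is a `k`-geodesic if it has length `k` and is a shortest path
between its endpoints. -/
def IsKGeodesic {V : Type*} (G : SimpleGraph V) (k : ℕ) {u v : V} (w : G.Walk u v) : Prop :=
  w.length = k ∧ G.dist u v = k

/-- A graph is `k`-edge geodetic if every edge lies on some `k`-geodesic. -/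
def IsEdgeGeodetic {V : Type*} (G : SimpleGraph V) (k : ℕ) : Prop :=
  ∀ e ∈ G.edgeSet, ∃ (u v : V) (w : G.Walk u v), IsKGeodesic G k w ∧ e ∈ w.edges

/-- A graph is `[k]`-edge geodetic if it is `k`-edge geodetic but not `(k+1)`-edge geodetic. -/
def IsMaxEdgeGeodetic {V : Type*} (G : SimpleGraph V) (k : ℕ) : Prop :=
  IsEdgeGeodetic G k ∧ ¬ IsEdgeGeodetic G (k + 1)

/-- `genNum G k` is the minimum number of `k`-geodesics of `G` whose edges
together cover all edges of `G`. -/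
noncomputable def genNum {V : Type*} (G : SimpleGraph V) (k : ℕ) : ℕ :=
  sInf {r : ℕ | ∃ f : Fin r → Σ u : V, Σ v : V, G.Walk u v,
    (∀ i, IsKGeodesic G k (f i).2.2) ∧
    ∀ e ∈ G.edgeSet, ∃ i, e ∈ (f i).2.2.edges}

/-- The strong product of two simple graphs. -/
def strongProd {α β : Type*} (G : SimpleGraph α) (H : SimpleGraph β) :
    SimpleGraph (α × β) where
  Adj x y := (x.1 = y.1 ∧ H.Adj x.2 y.2) ∨ (x.2 = y.2 ∧ G.Adj x.1 y.1) ∨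
    (G.Adj x.1 y.1 ∧ H.Adj x.2 y.2)
  symm := by
    constructor
    rintro ⟨a₁, b₁⟩ ⟨a₂, b₂⟩ (⟨h, h'⟩ | ⟨h, h'⟩ | ⟨h, h'⟩)
    · exact Or.inl ⟨h.symm, h'.symm⟩
    · exact Or.inr (Or.inl ⟨h.symm, h'.symm⟩)
    · exact Or.inr (Or.inr ⟨h.symm, h'.symm⟩)
  loopless := by
    constructor
    rintro ⟨a, b⟩ (⟨_, h⟩ | ⟨_, h⟩ | ⟨h, _⟩) <;> exact h.ne rfl

namespace SPAux

variable {α β : Type*} {G : SimpleGraph α} {H : SimpleGraph β}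

def liftG (b : β) : {u v : α} → G.Walk u v → (strongProd G H).Walk (u, b) (v, b)
  | _, _, .nil => .nil
  | _, _, @Walk.cons _ _ u z v h w =>
    .cons (show (strongProd G H).Adj (u, b) (z, b) from Or.inr (Or.inl ⟨rfl, h⟩)) (liftG b w)

def liftH (a : α) : {u v : β} → H.Walk u v → (strongProd G H).Walk (a, u) (a, v)
  | _, _, .nil => .nil
  | _, _, @Walk.cons _ _ u z v h w =>
    .cons (show (strongProd G H).Adj (a, u) (a, z) from Or.inl ⟨rfl, h⟩) (liftH a w)

@[simp] lemma liftG_length (b : β) {u v : α} (w : G.Walk u v) :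
    (liftG (H := H) b w).length = w.length := by
  induction w with
  | nil => rfl
  | cons h w ih => simp [liftG, ih]

@[simp] lemma liftH_length (a : α) {u v : β} (w : H.Walk u v) :
    (liftH (G := G) a w).length = w.length := by
  induction w with
  | nil => rfl
  | cons h w ih => simp [liftH, ih]

lemma liftG_edges (b : β) {u v x y : α} (w : G.Walk u v) (he : s(x, y) ∈ w.edges) :
    s((x, b), (y, b)) ∈ (liftG (H := H) b w).edges := by
  induction w with
  | nil => simp at he
  | @cons u z v h w ih =>
    rw [Walk.edges_cons] at he
    rcases List.mem_cons.mp he with he | he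
    · rcases Sym2.eq_iff.mp he with ⟨rfl, rfl⟩ | ⟨rfl, rfl⟩
      · simp [liftG]
      · simp only [liftG, Walk.edges_cons, List.mem_cons]
        left; exact Sym2.eq_swap
    · simp only [liftG, Walk.edges_cons, List.mem_cons]
      right; exact ih he

lemma liftH_edges (a : α) {u v x y : β} (w : H.Walk u v) (he : s(x, y) ∈ w.edges) :
    s((a, x), (a, y)) ∈ (liftH (G := G) a w).edges := by
  induction w with
  | nil => simp at he
  | @cons u z v h w ih =>
    rw [Walk.edges_cons] at he
    rcases List.mem_cons.mp he with he | he
    · rcases Sym2.eq_iff.mp he with ⟨rfl, rfl⟩ | ⟨rfl, rfl⟩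
      · simp [liftH]
      · simp only [liftH, Walk.edges_cons, List.mem_cons]
        left; exact Sym2.eq_swap
    · simp only [liftH, Walk.edges_cons, List.mem_cons]
      right; exact ih he

lemma adj_fst_of_ne {x z : α × β} (h : (strongProd G H).Adj x z) (hne : x.1 ≠ z.1) :
    G.Adj x.1 z.1 := by
  rcases h with ⟨h1, _⟩ | ⟨_, h2⟩ | ⟨h3, _⟩
  · exact absurd h1 hne
  · exact h2
  · exact h3

lemma adj_snd_of_ne {x z : α × β} (h : (strongProd G H).Adj x z) (hne : x.2 ≠ z.2) :
    H.Adj x.2 z.2 := by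
  rcases h with ⟨_, h1⟩ | ⟨h2, _⟩ | ⟨_, h3⟩
  · exact h1
  · exact absurd h2 hne
  · exact h3

open Classical in
noncomputable def projG : {x y : α × β} → (strongProd G H).Walk x y → G.Walk x.1 y.1
  | _, _, .nil => .nil
  | x, y, @Walk.cons _ _ _ z _ h w =>
    if hz : x.1 = z.1 then (projG w).copy hz.symm rfl
    else .cons (adj_fst_of_ne h hz) (projG w)

open Classical in
noncomputable def projH : {x y : α × β} → (strongProd G H).Walk x y → H.Walk x.2 y.2
  | _, _, .nil => .nil
  | x, y, @Walk.cons _ _ _ z _ h w =>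
    if hz : x.2 = z.2 then (projH w).copy hz.symm rfl
    else .cons (adj_snd_of_ne h hz) (projH w)


lemma projG_length_le : ∀ {x y : α × β} (w : (strongProd G H).Walk x y),
    (projG w).length ≤ w.length := by
  intro x y w
  induction w with
  | nil => simp [projG]
  | @cons x z y h w ih =>
    by_cases hz : x.1 = z.1
    · simp only [projG, dif_pos hz, Walk.length_copy, Walk.length_cons]
      omega
    · simp only [projG, dif_neg hz, Walk.length_cons]
      omega

lemma projH_length_le : ∀ {x y : α × β} (w : (strongProd G H).Walk x y),
    (projH w).length ≤ w.length := by
  intro x y w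
  induction w with
  | nil => simp [projH]
  | @cons x z y h w ih =>
    by_cases hz : x.2 = z.2
    · simp only [projH, dif_pos hz, Walk.length_copy, Walk.length_cons]
      omega
    · simp only [projH, dif_neg hz, Walk.length_cons]
      omega

lemma projG_edges {g1 g2 : α} {h1 h2 : β} :
    ∀ {x y : α × β} (w : (strongProd G H).Walk x y),
    s((g1, h1), (g2, h2)) ∈ w.edges → g1 ≠ g2 → s(g1, g2) ∈ (projG w).edges := by
  intro x y w he hne
  induction w with
  | nil => simp at he
  | @cons x z y h w ih =>
    rw [Walk.edges_cons] at he
    by_cases hz : x.1 = z.1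
    · simp only [projG, dif_pos hz, Walk.edges_copy]
      rcases List.mem_cons.mp he with he | he
      · rcases Sym2.eq_iff.mp he with ⟨h1', h2'⟩ | ⟨h1', h2'⟩
        · subst h1'; subst h2'; exact absurd hz hne
        · subst h1'; subst h2'; exact absurd hz.symm hne
      · exact ih he
    · simp only [projG, dif_neg hz, Walk.edges_cons, List.mem_cons]
      rcases List.mem_cons.mp he with he | he
      · left
        rcases Sym2.eq_iff.mp he with ⟨h1', h2'⟩ | ⟨h1', h2'⟩
        · subst h1'; subst h2'; rfl
        · subst h1'; subst h2'; exact Sym2.eq_swap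
      · right; exact ih he

lemma projH_edges {g1 g2 : α} {h1 h2 : β} :
    ∀ {x y : α × β} (w : (strongProd G H).Walk x y),
    s((g1, h1), (g2, h2)) ∈ w.edges → h1 ≠ h2 → s(h1, h2) ∈ (projH w).edges := by
  intro x y w he hne
  induction w with
  | nil => simp at he
  | @cons x z y h w ih =>
    rw [Walk.edges_cons] at he
    by_cases hz : x.2 = z.2
    · simp only [projH, dif_pos hz, Walk.edges_copy]
      rcases List.mem_cons.mp he with he | he
      · rcases Sym2.eq_iff.mp he with ⟨h1', h2'⟩ | ⟨h1', h2'⟩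
        · subst h1'; subst h2'; exact absurd hz hne
        · subst h1'; subst h2'; exact absurd hz.symm hne
      · exact ih he
    · simp only [projH, dif_neg hz, Walk.edges_cons, List.mem_cons]
      rcases List.mem_cons.mp he with he | he
      · left
        rcases Sym2.eq_iff.mp he with ⟨h1', h2'⟩ | ⟨h1', h2'⟩
        · subst h1'; subst h2'; rfl
        · subst h1'; subst h2'; exact Sym2.eq_swap
      · right; exact ih he

/-- If the walk contains a step that keeps the second coordinate fixed, its `H`-projection
is strictly shorter. -/
lemma projH_length_lt {g1 g2 : α} {h0 : β} :
    ∀ {x y : α × β} (w : (strongProd G H).Walk x y),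
    s((g1, h0), (g2, h0)) ∈ w.edges → (projH w).length + 1 ≤ w.length := by
  intro x y w he
  induction w with
  | nil => simp at he
  | @cons x z y h w ih =>
    rw [Walk.edges_cons] at he
    rcases List.mem_cons.mp he with he | he
    · have hz : x.2 = z.2 := by
        rcases Sym2.eq_iff.mp he with ⟨h1', h2'⟩ | ⟨h1', h2'⟩ <;> rw [← h1', ← h2']
      simp only [projH, dif_pos hz, Walk.length_copy, Walk.length_cons]
      have := projH_length_le w
      omega
    · have := ih he
      by_cases hz : x.2 = z.2
      · simp only [projH, dif_pos hz, Walk.length_copy, Walk.length_cons]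
        omega
      · simp only [projH, dif_neg hz, Walk.length_cons]
        omega

lemma projG_length_lt {h1 h2 : β} {g0 : α} :
    ∀ {x y : α × β} (w : (strongProd G H).Walk x y),
    s((g0, h1), (g0, h2)) ∈ w.edges → (projG w).length + 1 ≤ w.length := by
  intro x y w he
  induction w with
  | nil => simp at he
  | @cons x z y h w ih =>
    rw [Walk.edges_cons] at he
    rcases List.mem_cons.mp he with he | he
    · have hz : x.1 = z.1 := by
        rcases Sym2.eq_iff.mp he with ⟨h1', h2'⟩ | ⟨h1', h2'⟩ <;> rw [← h1', ← h2']
      simp only [projG, dif_pos hz, Walk.length_copy, Walk.length_cons]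
      have := projG_length_le w
      omega
    · have := ih he
      by_cases hz : x.1 = z.1
      · simp only [projG, dif_pos hz, Walk.length_copy, Walk.length_cons]
        omega
      · simp only [projG, dif_neg hz, Walk.length_cons]
        omega

/-- Splitting a walk at an edge. -/
lemma exists_split_at_edge {V : Type*} {Γ : SimpleGraph V} {a b : V} :
    ∀ {u v : V} (w : Γ.Walk u v), s(a, b) ∈ w.edges →
    ∃ (x y : V) (hxy : Γ.Adj x y) (w1 : Γ.Walk u x) (w2 : Γ.Walk y v),
      w1.length + 1 + w2.length = w.length ∧ s(x, y) = s(a, b) := by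
  intro u v w he
  induction w with
  | nil => simp at he
  | @cons u z v h w ih =>
    rw [Walk.edges_cons] at he
    rcases List.mem_cons.mp he with he | he
    · exact ⟨u, z, h, Walk.nil, w, by simp only [Walk.length_nil, Walk.length_cons]; omega, he.symm ▸ rfl⟩
    · obtain ⟨x, y, hxy, w1, w2, hlen, heq⟩ := ih he
      exact ⟨x, y, hxy, Walk.cons h w1, w2, by simp [hlen.symm]; omega, heq⟩

lemma cons_decomp {V : Type*} {Γ : SimpleGraph V} {u x : V} (w : Γ.Walk u x)
    (hw : 0 < w.length) : ∃ (z : V) (hz : Γ.Adj u z) (rest : Γ.Walk z x),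
      rest.length + 1 = w.length := by
  cases w with
  | nil => simp at hw
  | cons h rest => exact ⟨_, h, rest, by simp⟩

lemma eq_of_length_zero {V : Type*} {Γ : SimpleGraph V} {u x : V} (w : Γ.Walk u x)
    (hw : w.length = 0) : u = x := by
  cases w with
  | nil => rfl
  | cons h rest => simp at hw

lemma one_le_length_of_mem_edges {V : Type*} {Γ : SimpleGraph V} {u x : V} {e : Sym2 V}
    (w : Γ.Walk u x) (he : e ∈ w.edges) : 1 ≤ w.length := by
  cases w with
  | nil => simp at he
  | cons h rest => simp


lemma exists_zipWalk {a c : α} (P : G.Walk a c) : ∀ {b d : β} (Q : H.Walk b d),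
    ∃ W : (strongProd G H).Walk (a, b) (c, d), W.length = max P.length Q.length := by
  induction P with
  | nil =>
    intro b d Q
    exact ⟨liftH _ Q, by simp⟩
  | @cons a z c hadj P' ih =>
    intro b d Q
    cases Q with
    | nil => exact ⟨liftG b (Walk.cons hadj P'), by simp⟩
    | @cons b z' d hq Q' =>
      obtain ⟨W', hW'⟩ := ih Q'
      refine ⟨Walk.cons (Or.inr (Or.inr ⟨hadj, hq⟩)) W', ?_⟩
      show W'.length + 1 = _
      simp only [Walk.length_cons, hW']
      omega

lemma dist_strongProd_le (hGc : G.Connected) (hHc : H.Connected) (x y : α × β) :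
    (strongProd G H).dist x y ≤ max (G.dist x.1 y.1) (H.dist x.2 y.2) := by
  obtain ⟨P, hP⟩ := hGc.exists_walk_length_eq_dist x.1 y.1
  obtain ⟨Q, hQ⟩ := hHc.exists_walk_length_eq_dist x.2 y.2
  obtain ⟨W, hW⟩ := exists_zipWalk P Q
  calc (strongProd G H).dist x y = (strongProd G H).dist (x.1, x.2) (y.1, y.2) := by simp
    _ ≤ W.length := dist_le W
    _ = max (G.dist x.1 y.1) (H.dist x.2 y.2) := by rw [hW, hP, hQ]

lemma fst_dist_le_dist {x y : α × β} (h : (strongProd G H).Reachable x y) :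
    G.dist x.1 y.1 ≤ (strongProd G H).dist x y := by
  obtain ⟨w, hw⟩ := h.exists_walk_length_eq_dist
  calc G.dist x.1 y.1 ≤ (projG w).length := dist_le _
    _ ≤ w.length := projG_length_le w
    _ = _ := hw

lemma snd_dist_le_dist {x y : α × β} (h : (strongProd G H).Reachable x y) :
    H.dist x.2 y.2 ≤ (strongProd G H).dist x y := by
  obtain ⟨w, hw⟩ := h.exists_walk_length_eq_dist
  calc H.dist x.2 y.2 ≤ (projH w).length := dist_le _
    _ ≤ w.length := projH_length_le w
    _ = _ := hw


lemma downgrade_one {V : Type*} {Γ : SimpleGraph V} (hc : Γ.Connected) {j : ℕ} (hj : 1 ≤ j)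
    (h : IsEdgeGeodetic Γ (j + 1)) : IsEdgeGeodetic Γ j := by
  intro e
  induction e using Sym2.ind with
  | _ a b =>
  intro he
  obtain ⟨u, v, w, ⟨hwl, hwd⟩, hew⟩ := h s(a, b) he
  obtain ⟨x, y, hxy, w1, w2, hsum, heq⟩ := exists_split_at_edge w hew
  by_cases h1 : 0 < w1.length
  · obtain ⟨z, hz, rest, hrest⟩ := cons_decomp w1 h1
    have hlen : (rest.append (Walk.cons hxy w2)).length = j := by
      rw [Walk.length_append, Walk.length_cons]; omega
    refine ⟨z, v, rest.append (Walk.cons hxy w2), ⟨hlen, ?_⟩, ?_⟩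
    · have hle : Γ.dist z v ≤ j := by
        have := dist_le (rest.append (Walk.cons hxy w2)); omega
      have htri : Γ.dist u v ≤ Γ.dist u z + Γ.dist z v := hc.dist_triangle
      have huz : Γ.dist u z ≤ 1 := by
        have := dist_le (Walk.cons hz Walk.nil); simpa using this
      omega
    · rw [← heq, Walk.edges_append]
      exact List.mem_append_right _ (by simp)
  · have hux : u = x := eq_of_length_zero w1 (by omega)
    subst hux
    obtain ⟨z, hz, rest, hrest⟩ := cons_decomp w2.reverse (by rw [Walk.length_reverse]; omega)
    rw [Walk.length_reverse] at hrest
    have hlen : (Walk.cons hxy rest.reverse).length = j := by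
      rw [Walk.length_cons, Walk.length_reverse]; omega
    refine ⟨u, z, Walk.cons hxy rest.reverse, ⟨hlen, ?_⟩, ?_⟩
    · have hle : Γ.dist u z ≤ j := by
        have := dist_le (Walk.cons hxy rest.reverse); omega
      have htri : Γ.dist u v ≤ Γ.dist u z + Γ.dist z v := hc.dist_triangle
      have hzv : Γ.dist z v ≤ 1 := by
        have := dist_le (Walk.cons hz.symm Walk.nil); simpa using this
      omega
    · rw [← heq]; simp

lemma downgrade_add {V : Type*} {Γ : SimpleGraph V} (hc : Γ.Connected) {j : ℕ} (hj : 1 ≤ j) :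
    ∀ d, IsEdgeGeodetic Γ (j + d) → IsEdgeGeodetic Γ j := by
  intro d
  induction d with
  | zero => exact id
  | succ n ih => intro h; exact ih (downgrade_one hc (by omega) h)

lemma downgrade_le {V : Type*} {Γ : SimpleGraph V} (hc : Γ.Connected) {j m : ℕ}
    (hm : IsEdgeGeodetic Γ m) (hj : 1 ≤ j) (hjm : j ≤ m) : IsEdgeGeodetic Γ j := by
  obtain ⟨d, rfl⟩ := Nat.exists_eq_add_of_le hjm
  exact downgrade_add hc hj d hm

end SPAux

open SPAux

/-- If `G` is a finite connected `[p]`-edge geodetic graph and `H` is a finite connected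
`[q]`-edge geodetic graph, then the strong product `G ⊠ H` is `[min p q]`-edge geodetic. -/
theorem strongProd_maxEdgeGeodetic {α β : Type*} [Fintype α] [Fintype β]
    (G : SimpleGraph α) (H : SimpleGraph β) (hGc : G.Connected) (hHc : H.Connected)
    (p q : ℕ) (hG : IsMaxEdgeGeodetic G p) (hH : IsMaxEdgeGeodetic H q) :
    IsMaxEdgeGeodetic (strongProd G H) (min p q) := by
  obtain ⟨hG1, hG2⟩ := hG
  obtain ⟨hH1, hH2⟩ := hH
  rw [IsEdgeGeodetic] at hG2 hH2
  push_neg at hG2 hH2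
  obtain ⟨eG, heG, hGbad⟩ := hG2
  obtain ⟨eH, heH, hHbad⟩ := hH2
  have hp1 : 1 ≤ p := by
    obtain ⟨u, v, w, ⟨hl, _⟩, hew⟩ := hG1 eG heG
    have := one_le_length_of_mem_edges w hew; omega
  have hq1 : 1 ≤ q := by
    obtain ⟨u, v, w, ⟨hl, _⟩, hew⟩ := hH1 eH heH
    have := one_le_length_of_mem_edges w hew; omega
  set k := min p q with hk
  have hk1 : 1 ≤ k := le_min hp1 hq1
  have hGk : IsEdgeGeodetic G k := downgrade_le hGc hG1 hk1 (min_le_left _ _)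
  have hHk : IsEdgeGeodetic H k := downgrade_le hHc hH1 hk1 (min_le_right _ _)
  constructor
  · -- `k`-edge geodetic
    intro e
    induction e using Sym2.ind with
    | _ x y =>
    intro he
    obtain ⟨g1, h1⟩ := x
    obtain ⟨g2, h2⟩ := y
    have he' : (g1 = g2 ∧ H.Adj h1 h2) ∨ (h1 = h2 ∧ G.Adj g1 g2) ∨
        (G.Adj g1 g2 ∧ H.Adj h1 h2) := he
    rcases he' with ⟨hfst, hadjH⟩ | ⟨hsnd, hadjG⟩ | ⟨hadjG, hadjH⟩
    · subst hfst
      obtain ⟨u2, v2, Q, ⟨hQl, hQd⟩, hQe⟩ := hHk s(h1, h2) (H.mem_edgeSet.mpr hadjH)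
      obtain ⟨hb1, hb2, hadj', Q1, Q2, hsum, heq2⟩ := exists_split_at_edge Q hQe
      set Q' := Q1.append (Walk.cons hadj' Q2) with hQ'
      have hQ'l : Q'.length = k := by
        rw [hQ', Walk.length_append, Walk.length_cons]; omega
      have hQ'e : s(hb1, hb2) ∈ Q'.edges := by
        rw [hQ', Walk.edges_append]; exact List.mem_append_right _ (by simp)
      refine ⟨(g1, u2), (g1, v2), liftH g1 Q', ⟨by simp [hQ'l], ?_⟩, ?_⟩
      · apply le_antisymm
        · have := dist_le (liftH (G := G) g1 Q'); simpa [hQ'l] using this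
        · have hr : (strongProd G H).Reachable (g1, u2) (g1, v2) :=
            (liftH g1 Q').reachable
          have h2 := snd_dist_le_dist (G := G) (H := H) hr
          exact le_trans (le_of_eq hQd.symm) h2
      · have hmm := liftH_edges (G := G) g1 Q' hQ'e
        rcases Sym2.eq_iff.mp heq2 with ⟨rfl, rfl⟩ | ⟨rfl, rfl⟩
        · exact hmm
        · rw [Sym2.eq_swap]
          exact hmm
    · subst hsnd
      obtain ⟨u1, v1, P, ⟨hPl, hPd⟩, hPe⟩ := hGk s(g1, g2) (G.mem_edgeSet.mpr hadjG)
      obtain ⟨a, b, hadj', P1, P2, hsum, heq2⟩ := exists_split_at_edge P hPe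
      set P' := P1.append (Walk.cons hadj' P2) with hP'
      have hP'l : P'.length = k := by
        rw [hP', Walk.length_append, Walk.length_cons]; omega
      have hP'e : s(a, b) ∈ P'.edges := by
        rw [hP', Walk.edges_append]; exact List.mem_append_right _ (by simp)
      refine ⟨(u1, h1), (v1, h1), liftG h1 P', ⟨by simp [hP'l], ?_⟩, ?_⟩
      · apply le_antisymm
        · have := dist_le (liftG (H := H) h1 P'); simpa [hP'l] using this
        · have hr : (strongProd G H).Reachable (u1, h1) (v1, h1) :=
            (liftG h1 P').reachable
          have h2 := fst_dist_le_dist (G := G) (H := H) hr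
          exact le_trans (le_of_eq hPd.symm) h2
      · have hmm := liftG_edges (H := H) h1 P' hP'e
        rcases Sym2.eq_iff.mp heq2 with ⟨rfl, rfl⟩ | ⟨rfl, rfl⟩
        · exact hmm
        · rw [Sym2.eq_swap]
          exact hmm
    · obtain ⟨u1, v1, P, ⟨hPl, hPd⟩, hPe⟩ := hGk s(g1, g2) (G.mem_edgeSet.mpr hadjG)
      obtain ⟨a, b, hab, P1, P2, hsum, heq2⟩ := exists_split_at_edge P hPe
      rcases Sym2.eq_iff.mp heq2 with ⟨rfl, rfl⟩ | ⟨rfl, rfl⟩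
      · set W := (liftG h1 P1).append (Walk.cons
          (show (strongProd G H).Adj (a, h1) (b, h2) from Or.inr (Or.inr ⟨hab, hadjH⟩))
          (liftG h2 P2)) with hW
        have hWl : W.length = k := by
          rw [hW, Walk.length_append, Walk.length_cons, liftG_length, liftG_length]; omega
        have hWe : s((a, h1), (b, h2)) ∈ W.edges := by
          rw [hW, Walk.edges_append]; exact List.mem_append_right _ (by simp)
        refine ⟨(u1, h1), (v1, h2), W, ⟨hWl, ?_⟩, hWe⟩
        apply le_antisymm
        · have := dist_le W; omega
        · have h2 := fst_dist_le_dist (G := G) (H := H) W.reachable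
          exact le_trans (le_of_eq hPd.symm) h2
      · set W := (liftG h2 P1).append (Walk.cons
          (show (strongProd G H).Adj (a, h2) (b, h1) from Or.inr (Or.inr ⟨hab, hadjH.symm⟩))
          (liftG h1 P2)) with hW
        have hWl : W.length = k := by
          rw [hW, Walk.length_append, Walk.length_cons, liftG_length, liftG_length]; omega
        have hWe : s((a, h2), (b, h1)) ∈ W.edges := by
          rw [hW, Walk.edges_append]; exact List.mem_append_right _ (by simp)
        refine ⟨(u1, h2), (v1, h1), W, ⟨hWl, ?_⟩, ?_⟩
        · apply le_antisymm
          · have := dist_le W; omega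
          · have h2 := fst_dist_le_dist (G := G) (H := H) W.reachable
            exact le_trans (le_of_eq hPd.symm) h2
        · rw [show s((b, h1), (a, h2)) = s((a, h2), (b, h1)) from Sym2.eq_swap]
          exact hWe
  · -- not `(k+1)`-edge geodetic
    intro hcon
    rcases le_total p q with hpq | hqp
    · have hkp : k = p := min_eq_left hpq
      revert heG hGbad
      induction eG using Sym2.ind with
      | _ g1 g2 =>
      intro heG hGbad
      have hadj : G.Adj g1 g2 := G.mem_edgeSet.mp heG
      obtain ⟨h0⟩ := hHc.nonempty
      have hE : (strongProd G H).Adj (g1, h0) (g2, h0) := Or.inr (Or.inl ⟨rfl, hadj⟩)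
      obtain ⟨U, V, W, ⟨hWl, hWd⟩, hWe⟩ :=
        hcon s((g1, h0), (g2, h0)) ((strongProd G H).mem_edgeSet.mpr hE)
      have hdH : H.dist U.2 V.2 ≤ k := by
        have h1 := projH_length_lt W hWe
        have h2 := dist_le (projH W)
        omega
      have hdG_le : G.dist U.1 V.1 ≤ k + 1 := by
        have h1 := dist_le (projG W)
        have h2 := projG_length_le W
        omega
      have hub := dist_strongProd_le hGc hHc U V
      have hdG : G.dist U.1 V.1 = k + 1 := by omega
      have hPl : (projG W).length = k + 1 := by
        have h1 := projG_length_le W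
        have h2 := dist_le (projG W)
        omega
      exact hGbad U.1 V.1 (projG W) ⟨by omega, by omega⟩ (projG_edges W hWe hadj.ne)
    · have hkq : k = q := min_eq_right hqp
      revert heH hHbad
      induction eH using Sym2.ind with
      | _ h1 h2 =>
      intro heH hHbad
      have hadj : H.Adj h1 h2 := H.mem_edgeSet.mp heH
      obtain ⟨g0⟩ := hGc.nonempty
      have hE : (strongProd G H).Adj (g0, h1) (g0, h2) := Or.inl ⟨rfl, hadj⟩
      obtain ⟨U, V, W, ⟨hWl, hWd⟩, hWe⟩ :=
        hcon s((g0, h1), (g0, h2)) ((strongProd G H).mem_edgeSet.mpr hE)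
      have hdG : G.dist U.1 V.1 ≤ k := by
        have h1 := projG_length_lt W hWe
        have h2 := dist_le (projG W)
        omega
      have hdH_le : H.dist U.2 V.2 ≤ k + 1 := by
        have h1 := dist_le (projH W)
        have h2 := projH_length_le W
        omega
      have hub := dist_strongProd_le hGc hHc U V
      have hdH : H.dist U.2 V.2 = k + 1 := by omega
      have hPl : (projH W).length = k + 1 := by
        have h1 := projH_length_le W
        have h2 := dist_le (projH W)
        omega
      exact hHbad U.2 V.2 (projH W) ⟨by omega, by omega⟩ (projH_edges W hWe hadj.ne)
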